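/- (Van der Corput) Let 𝒦 ⊂ ℝ^d be a closed convex 0-symmetric set and Λ ⊂ ℝ^d a full-rank lattice. Then |𝒦 ∩ Λ| + 1 ≥ 2^{1−d} · vol(𝒦)/covol(Λ), where covol(Λ) is the volume of a fundamental domain of Λ. -/

import Mathlib

open MeasureTheory
open scoped ENNReal Pointwise

lemma vdc_tsum_one {β : Type*} (S : Set β) (hS : S.Finite) :
    ∑' _ : ↥S, (1 : ℝ≥0∞) = (S.ncard : ℝ≥0∞) := by
  haveI := hS.fintype
  rw [tsum_fintype]
  simp [Finset.card_univ]

lemma vdc_aux_card {G : Type*} [AddCommGroup G] {W : Type*} [AddCommGroup W] [LinearOrder W] [IsOrderedAddMonoid W]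
    (f : G → W) (hf : Function.Injective f) (hsub : ∀ a b, f (a - b) = f a - f b)
    (T C : Set G) (hC : C.Finite) (h0 : (0 : G) ∈ C)
    (hTC : ∀ g ∈ T, ∀ h ∈ T, g - h ∈ C) :
    T.Finite ∧ 2 * T.ncard ≤ C.ncard + 1 := by
  rcases T.eq_empty_or_nonempty with rfl | ⟨g₁, hg₁⟩
  · simp
  have hsubinj : ∀ c : G, Function.Injective (fun g : G => g - c) := by
    intro c a b h
    have := congrArg (· + c) h
    simpa using this
  have hsubinj' : ∀ c : G, Function.Injective (fun g : G => c - g) := by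
    intro c a b h
    have : c - (c - a) = c - (c - b) := congrArg (c - ·) h
    simpa using this
  have hTfin : T.Finite := by
    refine (hC.preimage ((hsubinj g₁).injOn)).subset ?_
    exact fun g hg => hTC g hg g₁ hg₁
  obtain ⟨g₀, hg₀T, hg₀min⟩ := Set.exists_min_image T f hTfin ⟨g₁, hg₁⟩
  set A := (fun g => g - g₀) '' (T \ {g₀}) with hA
  set B := (fun g => g₀ - g) '' (T \ {g₀}) with hB
  have hApos : ∀ a ∈ A, 0 < f a := by
    rintro _ ⟨g, ⟨hgT, hgne⟩, rfl⟩
    have hgne' : g ≠ g₀ := by simpa using hgne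
    have : f g₀ < f g := lt_of_le_of_ne (hg₀min g hgT) fun h => hgne' (hf h).symm
    rw [hsub]; simpa using this
  have hBneg : ∀ a ∈ B, f a < 0 := by
    rintro _ ⟨g, ⟨hgT, hgne⟩, rfl⟩
    have hgne' : g ≠ g₀ := by simpa using hgne
    have : f g₀ < f g := lt_of_le_of_ne (hg₀min g hgT) fun h => hgne' (hf h).symm
    rw [hsub]; simpa using this
  have hAC : A ⊆ C \ {0} := by
    rintro _ ⟨g, ⟨hgT, hgne⟩, rfl⟩
    refine ⟨hTC g hgT g₀ hg₀T, ?_⟩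
    simp only [Set.mem_singleton_iff, sub_eq_zero]
    intro h
    exact (by simpa using hgne : g ≠ g₀) h
  have hBC : B ⊆ C \ {0} := by
    rintro _ ⟨g, ⟨hgT, hgne⟩, rfl⟩
    refine ⟨hTC g₀ hg₀T g hgT, ?_⟩
    simp only [Set.mem_singleton_iff, sub_eq_zero]
    intro h
    exact (by simpa using hgne : g ≠ g₀) h.symm
  have hdisj : Disjoint A B := by
    rw [Set.disjoint_left]
    intro a ha hb
    exact absurd (hApos a ha) (not_lt.2 (hBneg a hb).le)
  have hTd : (T \ {g₀}).Finite := hTfin.diff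
  have hAfin : A.Finite := hTd.image _
  have hBfin : B.Finite := hTd.image _
  have hcard : A.ncard + B.ncard ≤ (C \ {0}).ncard := by
    rw [← Set.ncard_union_eq hdisj hAfin hBfin]
    exact Set.ncard_le_ncard (Set.union_subset hAC hBC) hC.diff
  rw [hA, hB, Set.ncard_image_of_injective _ (hsubinj g₀),
    Set.ncard_image_of_injective _ (hsubinj' g₀)] at hcard
  have h1 : (T \ {g₀}).ncard = T.ncard - 1 := Set.ncard_diff_singleton_of_mem hg₀T
  have h2 : (C \ {0}).ncard = C.ncard - 1 := Set.ncard_diff_singleton_of_mem h0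
  have h3 : 0 < T.ncard := (Set.ncard_pos hTfin).2 ⟨g₀, hg₀T⟩
  have h4 : 0 < C.ncard := (Set.ncard_pos hC).2 ⟨0, h0⟩
  refine ⟨hTfin, by omega⟩

theorem stmt_5 (d : ℕ) (hd : 0 < d)
    (K : Set (EuclideanSpace ℝ (Fin d))) (hKclosed : IsClosed K)
    (hKconv : Convex ℝ K) (hKsymm : ∀ x ∈ K, -x ∈ K)
    (L : Submodule ℤ (EuclideanSpace ℝ (Fin d)))
    [DiscreteTopology L] [IsZLattice ℝ L] :
    (2 : ℝ≥0∞) ^ ((1 : ℤ) - (d : ℤ)) * volume K / ENNReal.ofReal (ZLattice.covolume L) ≤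
      (∑' _ : ↥(K ∩ (L : Set (EuclideanSpace ℝ (Fin d)))), (1 : ℝ≥0∞)) + 1 := by
  classical
  -- trivial case: K empty
  rcases K.eq_empty_or_nonempty with hK | ⟨x₀, hx₀⟩
  · rw [hK]; simp
  have h0K : (0 : (EuclideanSpace ℝ (Fin d))) ∈ K := by
    have h1 := hKsymm x₀ hx₀
    have := hKconv hx₀ h1 (by norm_num : (0:ℝ) ≤ 1/2) (by norm_num : (0:ℝ) ≤ 1/2) (by norm_num)
    simpa using this
  -- trivial case: infinitely many lattice points
  by_cases hfin : (K ∩ (L : Set (EuclideanSpace ℝ (Fin d)))).Finite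
  swap
  · haveI : Infinite ↥(K ∩ (L : Set (EuclideanSpace ℝ (Fin d)))) :=
      Set.infinite_coe_iff.mpr hfin
    rw [ENNReal.tsum_const_eq_top_of_ne_zero one_ne_zero]
    simp
  set n := (K ∩ (L : Set (EuclideanSpace ℝ (Fin d)))).ncard with hn
  rw [vdc_tsum_one _ hfin]
  -- the fundamental domain
  let b := Module.Free.chooseBasis ℤ L
  set F := ZSpan.fundamentalDomain (Module.Basis.ofZLatticeBasis ℝ L b) with hF
  haveI : MeasurableVAdd ↥L (EuclideanSpace ℝ (Fin d)) := (inferInstance : MeasurableVAdd L.toAddSubgroup (EuclideanSpace ℝ (Fin d)))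
  haveI : VAddInvariantMeasure ↥L (EuclideanSpace ℝ (Fin d)) volume :=
    (inferInstance : VAddInvariantMeasure L.toAddSubgroup (EuclideanSpace ℝ (Fin d)) volume)
  have hfund : IsAddFundamentalDomain ↥L F volume := by
    have := ZSpan.isAddFundamentalDomain (Module.Basis.ofZLatticeBasis ℝ L b) volume
    rwa [Module.Basis.ofZLatticeBasis_span] at this
  have hFmeas : MeasurableSet F :=
    ZSpan.fundamentalDomain_measurableSet (Module.Basis.ofZLatticeBasis ℝ L b)
  have hFne_top : volume F ≠ ⊤ :=
    (ZSpan.fundamentalDomain_isBounded (Module.Basis.ofZLatticeBasis ℝ L b)).measure_lt_top.ne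
  have hFne_zero : volume F ≠ 0 :=
    ZSpan.measure_fundamentalDomain_ne_zero (Module.Basis.ofZLatticeBasis ℝ L b)
  have hcovol : ENNReal.ofReal (ZLattice.covolume L) = volume F := by
    rw [ZLattice.covolume_eq_measure_fundamentalDomain L volume hfund,
      ofReal_measureReal hFne_top]
  -- the half body
  set s : Set (EuclideanSpace ℝ (Fin d)) := (2⁻¹ : ℝ) • K with hs
  have hs_meas : MeasurableSet s := (hKclosed.smul_of_ne_zero (by norm_num)).measurableSet
  have hmeas_Ag : ∀ g : ↥L, MeasurableSet ((g +ᵥ s) ∩ F) := by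
    intro g
    exact (hs_meas.const_vadd (g : (EuclideanSpace ℝ (Fin d)))).inter hFmeas
  -- difference of two translates covering a common point lies in K ∩ L
  have hdiff : ∀ (x : (EuclideanSpace ℝ (Fin d))) (g h : ↥L), x ∈ (g : (EuclideanSpace ℝ (Fin d))) +ᵥ s → x ∈ (h : (EuclideanSpace ℝ (Fin d))) +ᵥ s →
      ((g : (EuclideanSpace ℝ (Fin d))) - (h : (EuclideanSpace ℝ (Fin d)))) ∈ K ∩ (L : Set (EuclideanSpace ℝ (Fin d))) := by
    intro x g h hg hh
    obtain ⟨a, ha, hax⟩ := hg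
    obtain ⟨c, hc, hcx⟩ := hh
    obtain ⟨a', ha', rfl⟩ := ha
    obtain ⟨c', hc', rfl⟩ := hc
    refine ⟨?_, Submodule.sub_mem L g.2 h.2⟩
    have hxg : x = (g : (EuclideanSpace ℝ (Fin d))) + (2⁻¹ : ℝ) • a' := hax.symm
    have hxh : x = (h : (EuclideanSpace ℝ (Fin d))) + (2⁻¹ : ℝ) • c' := hcx.symm
    have hgh : (g : (EuclideanSpace ℝ (Fin d))) - (h : (EuclideanSpace ℝ (Fin d))) = (2⁻¹ : ℝ) • c' + (2⁻¹ : ℝ) • (-a') := by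
      rw [smul_neg]
      have := hxg.symm.trans hxh
      -- g + 2⁻¹ a' = h + 2⁻¹ c'
      have h2 : (g : (EuclideanSpace ℝ (Fin d))) - (h : (EuclideanSpace ℝ (Fin d))) = (2⁻¹:ℝ) • c' - (2⁻¹:ℝ) • a' := by
        rw [sub_eq_sub_iff_add_eq_add]
        linear_combination (norm := module) this
      rw [h2]; abel
    rw [hgh]
    exact hKconv hc' (hKsymm a' ha') (by norm_num) (by norm_num) (by norm_num)
  -- the key pointwise bound
  have hpt : ∀ x : (EuclideanSpace ℝ (Fin d)),
      2 * ∑' g : ↥L, ((g +ᵥ s) ∩ F).indicator (1 : EuclideanSpace ℝ (Fin d) → ℝ≥0∞) x ≤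
        ((n : ℝ≥0∞) + 1) * F.indicator (1 : EuclideanSpace ℝ (Fin d) → ℝ≥0∞) x := by
    intro x
    by_cases hxF : x ∈ F
    swap
    · have hz : ∀ g : ↥L, ((g +ᵥ s) ∩ F).indicator (1 : EuclideanSpace ℝ (Fin d) → ℝ≥0∞) x = 0 := by
        intro g
        exact Set.indicator_of_notMem (fun hx => hxF hx.2) _
      rw [ENNReal.tsum_eq_zero.mpr hz, mul_zero]
      exact zero_le
    set TG : Set ↥L := {g : ↥L | x ∈ (g : (EuclideanSpace ℝ (Fin d))) +ᵥ s} with hTG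
    have hind : ∀ g : ↥L, ((g +ᵥ s) ∩ F).indicator (1 : EuclideanSpace ℝ (Fin d) → ℝ≥0∞) x =
        TG.indicator (1 : ↥L → ℝ≥0∞) g := by
      intro g
      by_cases hg : g ∈ TG
      · rw [Set.indicator_of_mem hg,
          Set.indicator_of_mem (show x ∈ (g +ᵥ s) ∩ F from ⟨hg, hxF⟩)]
        rfl
      · rw [Set.indicator_of_notMem hg,
          Set.indicator_of_notMem (show x ∉ (g +ᵥ s) ∩ F from fun hx => hg hx.1)]
    rw [tsum_congr hind, ← tsum_subtype]
    simp only [Pi.one_apply]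
    -- combinatorial bound
    letI : LinearOrder (Lex (Fin d → ℝ)) :=
      have : WellFoundedLT (Fin d) := inferInstance
      inferInstance
    set TE : Set (EuclideanSpace ℝ (Fin d)) := Subtype.val '' TG with hTE
    have key := vdc_aux_card (G := (EuclideanSpace ℝ (Fin d))) (W := Lex (Fin d → ℝ))
      (fun y => toLex ((WithLp.equiv 2 (Fin d → ℝ)) y))
      (fun a b hab => (WithLp.equiv 2 (Fin d → ℝ)).injective (toLex.injective hab))
      (fun a b => rfl) TE (K ∩ (L : Set (EuclideanSpace ℝ (Fin d)))) hfin ⟨h0K, L.zero_mem⟩ ?_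
    swap
    · rintro _ ⟨g, hg, rfl⟩ _ ⟨h, hh, rfl⟩
      exact hdiff x g h hg hh
    obtain ⟨hTEfin, hTEcard⟩ := key
    have hTGfin : TG.Finite := hTEfin.of_finite_image Subtype.val_injective.injOn
    have hTGcard : TG.ncard = TE.ncard :=
      (Set.ncard_image_of_injective TG Subtype.val_injective).symm
    rw [vdc_tsum_one TG hTGfin, Set.indicator_of_mem hxF]
    simp only [Pi.one_apply, mul_one]
    have : 2 * TG.ncard ≤ n + 1 := by rw [hTGcard]; exact hTEcard
    calc 2 * (TG.ncard : ℝ≥0∞) = ((2 * TG.ncard : ℕ) : ℝ≥0∞) := by push_cast; ring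
      _ ≤ ((n + 1 : ℕ) : ℝ≥0∞) := by exact_mod_cast Nat.cast_le.2 this
      _ = (n : ℝ≥0∞) + 1 := by push_cast; ring
  -- integrate the pointwise bound
  have main : 2 * volume s ≤ ((n : ℝ≥0∞) + 1) * volume F := by
    have hdecomp : volume s = ∑' g : ↥L, volume ((g +ᵥ s) ∩ F) := hfund.measure_eq_tsum s
    calc 2 * volume s
        = 2 * ∑' g : ↥L, ∫⁻ x, ((g +ᵥ s) ∩ F).indicator (1 : EuclideanSpace ℝ (Fin d) → ℝ≥0∞) x := by
          rw [hdecomp]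
          congr 1
          exact tsum_congr fun g => (lintegral_indicator_one (hmeas_Ag g)).symm
      _ = 2 * ∫⁻ x, ∑' g : ↥L, ((g +ᵥ s) ∩ F).indicator (1 : EuclideanSpace ℝ (Fin d) → ℝ≥0∞) x := by
          rw [lintegral_tsum fun g =>
            ((measurable_one.indicator (hmeas_Ag g)).aemeasurable)]
      _ = ∫⁻ x, 2 * ∑' g : ↥L, ((g +ᵥ s) ∩ F).indicator (1 : EuclideanSpace ℝ (Fin d) → ℝ≥0∞) x := by
          rw [lintegral_const_mul' 2 _ (by simp)]
      _ ≤ ∫⁻ x, ((n : ℝ≥0∞) + 1) * F.indicator (1 : EuclideanSpace ℝ (Fin d) → ℝ≥0∞) x := lintegral_mono hpt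
      _ = ((n : ℝ≥0∞) + 1) * volume F := by
          rw [lintegral_const_mul' _ _ (by simp), lintegral_indicator_one hFmeas]
  -- conclude
  rw [ENNReal.div_le_iff (hcovol ▸ hFne_zero) (hcovol ▸ hFne_top), hcovol]
  have hμs : volume s = ENNReal.ofReal ((2⁻¹:ℝ)^d) * volume K := by
    rw [hs, Measure.addHaar_smul_of_nonneg volume (by norm_num) K, finrank_euclideanSpace_fin]
  have hpow : (2:ℝ≥0∞) ^ ((1:ℤ) - (d:ℤ)) = 2 * ENNReal.ofReal ((2⁻¹:ℝ)^d) := by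
    rw [ENNReal.ofReal_pow (by norm_num), ENNReal.ofReal_inv_of_pos (by norm_num), sub_eq_add_neg,
      ENNReal.zpow_add two_ne_zero ENNReal.ofNat_ne_top, zpow_one,
      ENNReal.zpow_neg, zpow_natCast, ENNReal.inv_pow]
    norm_num
  calc (2:ℝ≥0∞) ^ ((1:ℤ) - (d:ℤ)) * volume K = 2 * volume s := by
        rw [hpow, hμs, mul_assoc]
    _ ≤ ((n : ℝ≥0∞) + 1) * volume F := main
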